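/- arXiv:0711.1710 — 2 statements merged into one kernel-verified Lean document; each statement's English description precedes it below -/
import Mathlib

section
/- For every real s > 2, ∫₀^∞ u^{s/2+3} θ''(u)² du = 9/(8(s−2)) + ∫₁^∞ u^{s/2+3} θ''(u)² du + ∫₁^∞ u^{−s/2+4} θ''(u)² du + 6 ∫₁^∞ u^{−s/2+3} θ'(u) θ''(u) du + (3/2) ∫₁^∞ u^{−s/2+2} θ(u) θ''(u) du + (9/2) ∫₁^∞ u^{−s/2+1} θ(u) θ'(u) du + 9 ∫₁^∞ u^{−s/2+2} θ'(u)² du + (9/16) ∫₁^∞ u^{−s/2} (θ(u)² − 1) du. -/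
open MeasureTheory

open Real Set Filter Topology


lemma summable_base (k : ℕ) {u : ℝ} (hu : 0 < u) :
    Summable (fun n : ℤ ↦ (|(n:ℝ)| ^ k) * rexp (-π * (n:ℝ) ^ 2 * u)) := by
  have := summable_pow_mul_jacobiTheta₂_term_bound 0 hu k
  refine this.congr fun n ↦ ?_
  push_cast
  ring_nf

lemma summable_k (k : ℕ) {u : ℝ} (hu : 0 < u) :
    Summable (fun n : ℤ ↦ (π * (n:ℝ) ^ 2) ^ k * rexp (-π * (n:ℝ) ^ 2 * u)) := by
  have := (summable_base (2 * k) hu).mul_left (π ^ k)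
  refine this.congr fun n ↦ ?_
  rw [← mul_assoc, mul_pow]
  congr 2
  rw [pow_mul, ← abs_pow, abs_of_nonneg (by positivity : (0:ℝ) ≤ (n:ℝ) ^ 2)]

lemma hasDerivAt_term (n : ℤ) (u : ℝ) :
    HasDerivAt (fun v : ℝ ↦ rexp (-π * (n:ℝ) ^ 2 * v))
      ((-(π * (n:ℝ) ^ 2)) * rexp (-π * (n:ℝ) ^ 2 * u)) u := by
  have h := ((hasDerivAt_id u).const_mul (-π * (n:ℝ) ^ 2)).exp
  simp only [id_eq] at h
  convert h using 1
  ring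

lemma hasDerivAt_term2 (n : ℤ) (u : ℝ) :
    HasDerivAt (fun v : ℝ ↦ (-(π * (n:ℝ) ^ 2)) * rexp (-π * (n:ℝ) ^ 2 * v))
      ((π * (n:ℝ) ^ 2) ^ 2 * rexp (-π * (n:ℝ) ^ 2 * u)) u := by
  have := (hasDerivAt_term n u).const_mul (-(π * (n:ℝ) ^ 2))
  refine this.congr_deriv ?_
  ring

lemma hasDerivAt_term3 (n : ℤ) (u : ℝ) :
    HasDerivAt (fun v : ℝ ↦ (π * (n:ℝ) ^ 2) ^ 2 * rexp (-π * (n:ℝ) ^ 2 * v))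
      ((-(π * (n:ℝ) ^ 2)) ^ 3 * rexp (-π * (n:ℝ) ^ 2 * u)) u := by
  have := (hasDerivAt_term n u).const_mul ((π * (n:ℝ) ^ 2) ^ 2)
  refine this.congr_deriv ?_
  ring

/-- The Jacobi theta function `θ(u) = ∑_{n∈ℤ} e^{-πn²u}`. -/
noncomputable def jTheta (u : ℝ) : ℝ := ∑' n : ℤ, Real.exp (-Real.pi * (n : ℝ) ^ 2 * u)

noncomputable def jT1 (u : ℝ) : ℝ := ∑' n : ℤ, (-(π * (n:ℝ) ^ 2)) * rexp (-π * (n:ℝ) ^ 2 * u)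
noncomputable def jT2 (u : ℝ) : ℝ := ∑' n : ℤ, (π * (n:ℝ) ^ 2) ^ 2 * rexp (-π * (n:ℝ) ^ 2 * u)

lemma summable_exp {x : ℝ} (hx : 0 < x) : Summable (fun n : ℤ ↦ rexp (-π * (n:ℝ) ^ 2 * x)) :=
  (summable_base 0 hx).congr fun n ↦ by rw [pow_zero, one_mul]

lemma hasDerivAt_jTheta {x : ℝ} (hx : 0 < x) : HasDerivAt jTheta (jT1 x) x := by
  have h2 : (0:ℝ) < x/2 := by linarith
  exact hasDerivAt_tsum_of_isPreconnected
    ((summable_k 1 h2).congr fun n ↦ by rw [pow_one])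
    isOpen_Ioi isPreconnected_Ioi
    (fun n y _ ↦ hasDerivAt_term n y)
    (fun n y hy ↦ by
      rw [Real.norm_eq_abs, abs_mul, abs_neg, abs_of_nonneg (by positivity),
        abs_of_nonneg (Real.exp_nonneg _)]
      refine mul_le_mul_of_nonneg_left (Real.exp_le_exp.mpr ?_) (by positivity)
      nlinarith [mul_le_mul_of_nonneg_left (le_of_lt (mem_Ioi.mp hy)) (show (0:ℝ) ≤ π * (n:ℝ)^2 by positivity)])
    (mem_Ioi.mpr (half_lt_self hx)) (summable_exp hx) (mem_Ioi.mpr (half_lt_self hx))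

lemma hasDerivAt_jT1 {x : ℝ} (hx : 0 < x) : HasDerivAt jT1 (jT2 x) x := by
  have h2 : (0:ℝ) < x/2 := by linarith
  exact hasDerivAt_tsum_of_isPreconnected
    (summable_k 2 h2)
    isOpen_Ioi isPreconnected_Ioi
    (fun n y _ ↦ hasDerivAt_term2 n y)
    (fun n y hy ↦ by
      rw [Real.norm_eq_abs, abs_mul, abs_of_nonneg (by positivity),
        abs_of_nonneg (Real.exp_nonneg _)]
      refine mul_le_mul_of_nonneg_left (Real.exp_le_exp.mpr ?_) (by positivity)
      nlinarith [mul_le_mul_of_nonneg_left (le_of_lt (mem_Ioi.mp hy)) (show (0:ℝ) ≤ π * (n:ℝ)^2 by positivity)])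
    (mem_Ioi.mpr (half_lt_self hx))
    (((summable_k 1 hx).neg).congr fun n ↦ by rw [pow_one]; ring)
    (mem_Ioi.mpr (half_lt_self hx))

lemma hasDerivAt_jT2 {x : ℝ} (hx : 0 < x) :
    HasDerivAt jT2 (∑' n : ℤ, (-(π * (n:ℝ) ^ 2)) ^ 3 * rexp (-π * (n:ℝ) ^ 2 * x)) x := by
  have h2 : (0:ℝ) < x/2 := by linarith
  exact hasDerivAt_tsum_of_isPreconnected
    (summable_k 3 h2)
    isOpen_Ioi isPreconnected_Ioi
    (fun n y _ ↦ hasDerivAt_term3 n y)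
    (fun n y hy ↦ by
      rw [Real.norm_eq_abs, abs_mul, abs_pow, abs_neg, abs_of_nonneg (by positivity : (0:ℝ) ≤ π * (n:ℝ)^2),
        abs_of_nonneg (Real.exp_nonneg _)]
      refine mul_le_mul_of_nonneg_left (Real.exp_le_exp.mpr ?_) (by positivity)
      nlinarith [mul_le_mul_of_nonneg_left (le_of_lt (mem_Ioi.mp hy)) (show (0:ℝ) ≤ π * (n:ℝ)^2 by positivity)])
    (mem_Ioi.mpr (half_lt_self hx)) (summable_k 2 hx) (mem_Ioi.mpr (half_lt_self hx))

lemma deriv_jTheta_eqOn : Set.EqOn (deriv jTheta) jT1 (Ioi 0) :=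
  fun _ hx ↦ (hasDerivAt_jTheta hx).deriv

lemma deriv2_jTheta_eq {x : ℝ} (hx : 0 < x) : deriv (deriv jTheta) x = jT2 x := by
  have h : deriv jTheta =ᶠ[𝓝 x] jT1 :=
    eventually_of_mem (isOpen_Ioi.mem_nhds hx) deriv_jTheta_eqOn
  rw [h.deriv_eq, (hasDerivAt_jT1 hx).deriv]

lemma jTheta_eq_evenKernel {t : ℝ} (ht : 0 < t) : jTheta t = HurwitzZeta.evenKernel 0 t := by
  rw [jTheta]
  have h := HurwitzZeta.hasSum_int_evenKernel (0:ℝ) ht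
  simp only [add_zero] at h
  rw [h.tsum_eq]
  norm_num

lemma jTheta_funEq {x : ℝ} (hx : 0 < x) : jTheta x = x ^ (-(1/2) : ℝ) * jTheta x⁻¹ := by
  rw [jTheta_eq_evenKernel hx, jTheta_eq_evenKernel (inv_pos.mpr hx),
    HurwitzZeta.evenKernel_functional_equation 0 x,
    HurwitzZeta.evenKernel_eq_cosKernel_of_zero, one_div x, Real.rpow_neg hx.le, one_div]

lemma rpow_half_nat {x : ℝ} (hx : 0 < x) (k : ℕ) :
    x ^ (-(k:ℝ)/2) = (x ^ (-(1/2):ℝ))^k := by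
  rw [← Real.rpow_natCast (x ^ (-(1/2):ℝ)) k, ← Real.rpow_mul hx.le]
  congr 1
  ring

lemma sq_inv_eq {x : ℝ} (hx : 0 < x) : (x^2)⁻¹ = (x ^ (-(1/2):ℝ))^4 := by
  rw [← rpow_half_nat hx 4, ← Real.rpow_natCast x 2, ← Real.rpow_neg hx.le]
  congr 1
  norm_num

lemma hasDerivAt_inv_comp_jTheta {x : ℝ} (hx : 0 < x) :
    HasDerivAt (fun v : ℝ ↦ jTheta v⁻¹) (jT1 x⁻¹ * -(x^2)⁻¹) x :=
  (hasDerivAt_jTheta (inv_pos.mpr hx)).comp x (hasDerivAt_inv hx.ne')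

lemma hasDerivAt_inv_comp_jT1 {x : ℝ} (hx : 0 < x) :
    HasDerivAt (fun v : ℝ ↦ jT1 v⁻¹) (jT2 x⁻¹ * -(x^2)⁻¹) x :=
  (hasDerivAt_jT1 (inv_pos.mpr hx)).comp x (hasDerivAt_inv hx.ne')

lemma jT1_funEq {x : ℝ} (hx : 0 < x) :
    jT1 x = -(1/2) * x ^ (-(3:ℝ)/2) * jTheta x⁻¹ - x ^ (-(5:ℝ)/2) * jT1 x⁻¹ := by
  have h1 : HasDerivAt (fun v : ℝ ↦ v ^ (-(1/2):ℝ)) (-(1/2) * x ^ ((-(1/2):ℝ) - 1)) x :=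
    Real.hasDerivAt_rpow_const (Or.inl hx.ne')
  have hD := h1.mul (hasDerivAt_inv_comp_jTheta hx)
  have heq : jT1 x = deriv (fun v : ℝ ↦ v ^ (-(1/2):ℝ) * jTheta v⁻¹) x := by
    rw [← (hasDerivAt_jTheta hx).deriv]
    apply Filter.EventuallyEq.deriv_eq
    filter_upwards [isOpen_Ioi.mem_nhds hx] with y hy
    exact jTheta_funEq hy
  rw [heq, HasDerivAt.deriv (f := fun v : ℝ ↦ v ^ (-(1/2):ℝ) * jTheta v⁻¹) hD, sq_inv_eq hx,
    show ((-(1/2):ℝ) - 1) = -(3:ℕ)/2 by norm_num, rpow_half_nat hx,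
    show (-(3:ℝ)/2) = -(3:ℕ)/2 by norm_num, rpow_half_nat hx,
    show (-(5:ℝ)/2) = -(5:ℕ)/2 by norm_num, rpow_half_nat hx,
    show (-(1/2):ℝ) = -(1:ℕ)/2 by norm_num, rpow_half_nat hx]
  ring

lemma jT2_funEq {x : ℝ} (hx : 0 < x) :
    jT2 x = (3/4) * x ^ (-(5:ℝ)/2) * jTheta x⁻¹ + 3 * x ^ (-(7:ℝ)/2) * jT1 x⁻¹
      + x ^ (-(9:ℝ)/2) * jT2 x⁻¹ := by
  have hA : HasDerivAt (fun v : ℝ ↦ -(1/2) * v ^ (-(3:ℝ)/2))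
      (-(1/2) * (-(3:ℝ)/2 * x ^ ((-(3:ℝ)/2) - 1))) x :=
    (Real.hasDerivAt_rpow_const (Or.inl hx.ne')).const_mul (-(1/2))
  have hC : HasDerivAt (fun v : ℝ ↦ v ^ (-(5:ℝ)/2)) (-(5:ℝ)/2 * x ^ ((-(5:ℝ)/2) - 1)) x :=
    Real.hasDerivAt_rpow_const (Or.inl hx.ne')
  have hD := (hA.mul (hasDerivAt_inv_comp_jTheta hx)).sub
    (hC.mul (hasDerivAt_inv_comp_jT1 hx))
  have heq : jT2 x = deriv (fun v : ℝ ↦ -(1/2) * v ^ (-(3:ℝ)/2) * jTheta v⁻¹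
      - v ^ (-(5:ℝ)/2) * jT1 v⁻¹) x := by
    rw [← (hasDerivAt_jT1 hx).deriv]
    apply Filter.EventuallyEq.deriv_eq
    filter_upwards [isOpen_Ioi.mem_nhds hx] with y hy
    exact jT1_funEq hy
  rw [heq, HasDerivAt.deriv (f := fun v : ℝ ↦ -(1/2) * v ^ (-(3:ℝ)/2) * jTheta v⁻¹
        - v ^ (-(5:ℝ)/2) * jT1 v⁻¹) hD, sq_inv_eq hx,
    show ((-(3:ℝ)/2) - 1) = -(5:ℕ)/2 by norm_num,
    show ((-(5:ℝ)/2) - 1) = -(7:ℕ)/2 by norm_num,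
    show (-(3:ℝ)/2) = -(3:ℕ)/2 by norm_num,
    show (-(5:ℝ)/2) = -(5:ℕ)/2 by norm_num,
    show (-(7:ℝ)/2) = -(7:ℕ)/2 by norm_num,
    show (-(9:ℝ)/2) = -(9:ℕ)/2 by norm_num,
    rpow_half_nat hx, rpow_half_nat hx, rpow_half_nat hx, rpow_half_nat hx]
  push_cast
  ring

lemma term_bound {u : ℝ} (hu : 1 ≤ u) {n : ℤ} (hn : n ≠ 0) :
    rexp (-π * (n:ℝ) ^ 2 * u) ≤ rexp π * rexp (-π * (n:ℝ) ^ 2) * rexp (-u) := by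
  rw [← Real.exp_add, ← Real.exp_add]
  apply Real.exp_le_exp.mpr
  have h : (1:ℤ) ≤ |n| := Int.one_le_abs hn
  have h' : (1:ℝ) ≤ |(n:ℝ)| := by exact_mod_cast h
  have h1 : (1:ℝ) ≤ (n:ℝ) ^ 2 := by nlinarith [sq_abs ((n:ℝ))]
  nlinarith [Real.pi_gt_three,
    mul_nonneg (mul_nonneg Real.pi_pos.le (sub_nonneg.mpr h1)) (sub_nonneg.mpr hu), hu]

lemma abs_tsum_le {f g : ℤ → ℝ} (hg : Summable g) (h : ∀ n, |f n| ≤ g n) :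
    |∑' n, f n| ≤ ∑' n, g n := by
  have hf : Summable fun n ↦ |f n| := hg.of_nonneg_of_le (fun n ↦ abs_nonneg _) h
  have hf' : Summable fun n ↦ ‖f n‖ := by simpa only [Real.norm_eq_abs] using hf
  calc |∑' n, f n| = ‖∑' n, f n‖ := (Real.norm_eq_abs _).symm
    _ ≤ ∑' n, ‖f n‖ := norm_tsum_le_tsum_norm hf'
    _ = ∑' n, |f n| := by simp only [Real.norm_eq_abs]
    _ ≤ ∑' n, g n := Summable.tsum_le_tsum h hf hg

noncomputable def Ck (k : ℕ) : ℝ := rexp π * ∑' n : ℤ, (π * (n:ℝ) ^ 2) ^ k * rexp (-π * (n:ℝ) ^ 2)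

lemma Ck_nonneg (k : ℕ) : 0 ≤ Ck k :=
  mul_nonneg (Real.exp_nonneg _) (tsum_nonneg fun n ↦ by positivity)

lemma summable_k_one (k : ℕ) : Summable (fun n : ℤ ↦ (π * (n:ℝ) ^ 2) ^ k * rexp (-π * (n:ℝ) ^ 2)) :=
  (summable_k k one_pos).congr fun n ↦ by rw [mul_one]

lemma sum_k_bound (k : ℕ) (hk : k ≠ 0) {u : ℝ} (hu : 1 ≤ u) :
    |∑' n : ℤ, (π * (n:ℝ) ^ 2) ^ k * rexp (-π * (n:ℝ) ^ 2 * u)| ≤ Ck k * rexp (-u) := by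
  set g : ℤ → ℝ := fun n ↦ (rexp π * rexp (-u)) * ((π * (n:ℝ) ^ 2) ^ k * rexp (-π * (n:ℝ) ^ 2))
    with hgdef
  have hg : Summable g := (summable_k_one k).mul_left _
  have hb : ∀ n : ℤ, |(π * (n:ℝ) ^ 2) ^ k * rexp (-π * (n:ℝ) ^ 2 * u)| ≤ g n := by
    intro n
    rcases eq_or_ne n 0 with rfl | hn
    · simp only [hgdef, Int.cast_zero, ne_eq, OfNat.ofNat_ne_zero, not_false_eq_true, zero_pow,
        mul_zero, zero_pow hk, zero_mul, abs_zero]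
      positivity
    · rw [abs_of_nonneg (by positivity)]
      calc (π * (n:ℝ) ^ 2) ^ k * rexp (-π * (n:ℝ) ^ 2 * u)
          ≤ (π * (n:ℝ) ^ 2) ^ k * (rexp π * rexp (-π * (n:ℝ) ^ 2) * rexp (-u)) :=
            mul_le_mul_of_nonneg_left (term_bound hu hn) (by positivity)
        _ = g n := by rw [hgdef]; ring
  have h := abs_tsum_le hg hb
  rw [hgdef, tsum_mul_left] at h
  calc |∑' n : ℤ, (π * (n:ℝ) ^ 2) ^ k * rexp (-π * (n:ℝ) ^ 2 * u)| ≤ _ := h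
    _ = Ck k * rexp (-u) := by rw [Ck]; ring

lemma jT1_bound {u : ℝ} (hu : 1 ≤ u) : |jT1 u| ≤ Ck 1 * rexp (-u) := by
  have h := sum_k_bound 1 one_ne_zero hu
  rw [jT1]
  have heq : ∑' n : ℤ, (-(π * (n:ℝ) ^ 2)) * rexp (-π * (n:ℝ) ^ 2 * u)
      = -∑' n : ℤ, (π * (n:ℝ) ^ 2) ^ 1 * rexp (-π * (n:ℝ) ^ 2 * u) := by
    rw [← tsum_neg]
    exact tsum_congr fun n ↦ by ring
  rw [heq, abs_neg]
  exact h

lemma jT2_bound {u : ℝ} (hu : 1 ≤ u) : |jT2 u| ≤ Ck 2 * rexp (-u) :=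
  sum_k_bound 2 two_ne_zero hu

lemma jTheta_sub_one_bound {u : ℝ} (hu : 1 ≤ u) : |jTheta u - 1| ≤ Ck 0 * rexp (-u) := by
  have hsum := summable_exp (by linarith : (0:ℝ) < u)
  have h0 : jTheta u = 1 + ∑' n : ℤ, if n = 0 then 0 else rexp (-π * (n:ℝ) ^ 2 * u) := by
    rw [jTheta, Summable.tsum_eq_add_tsum_ite hsum 0]
    norm_num
  rw [h0, add_sub_cancel_left]
  set g : ℤ → ℝ := fun n ↦ (rexp π * rexp (-u)) * ((π * (n:ℝ) ^ 2) ^ 0 * rexp (-π * (n:ℝ) ^ 2))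
    with hgdef
  have hg : Summable g := (summable_k_one 0).mul_left _
  have hb : ∀ n : ℤ, |if n = 0 then 0 else rexp (-π * (n:ℝ) ^ 2 * u)| ≤ g n := by
    intro n
    rcases eq_or_ne n 0 with rfl | hn
    · rw [if_pos rfl, abs_zero]
      simp only [hgdef]
      positivity
    · rw [if_neg hn, abs_of_nonneg (Real.exp_nonneg _), hgdef]
      calc rexp (-π * (n:ℝ) ^ 2 * u) ≤ rexp π * rexp (-π * (n:ℝ) ^ 2) * rexp (-u) :=
            term_bound hu hn
        _ = rexp π * rexp (-u) * ((π * (n:ℝ) ^ 2) ^ 0 * rexp (-π * (n:ℝ) ^ 2)) := by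
            rw [pow_zero]; ring
  have h := abs_tsum_le hg hb
  rw [hgdef, tsum_mul_left] at h
  calc _ ≤ _ := h
    _ = Ck 0 * rexp (-u) := by rw [Ck]; ring

lemma jTheta_abs_bound {u : ℝ} (hu : 1 ≤ u) : |jTheta u| ≤ 1 + Ck 0 := by
  have h := jTheta_sub_one_bound hu
  have he : rexp (-u) ≤ 1 := Real.exp_le_one_iff.mpr (by linarith)
  have hC := Ck_nonneg 0
  calc |jTheta u| = |(jTheta u - 1) + 1| := by ring_nf
    _ ≤ |jTheta u - 1| + |1| := abs_add_le _ _
    _ ≤ Ck 0 * rexp (-u) + 1 := by rw [abs_one]; linarith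
    _ ≤ 1 + Ck 0 := by nlinarith

lemma contOn_jTheta : ContinuousOn jTheta (Ioi 0) :=
  fun _ hx ↦ (hasDerivAt_jTheta hx).continuousAt.continuousWithinAt

lemma contOn_jT1 : ContinuousOn jT1 (Ioi 0) :=
  fun _ hx ↦ (hasDerivAt_jT1 hx).continuousAt.continuousWithinAt

lemma contOn_jT2 : ContinuousOn jT2 (Ioi 0) :=
  fun _ hx ↦ (hasDerivAt_jT2 hx).continuousAt.continuousWithinAt

lemma contOn_jTheta' : ContinuousOn jTheta (Ioi 1) :=
  contOn_jTheta.mono (Ioi_subset_Ioi zero_le_one)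
lemma contOn_jT1' : ContinuousOn jT1 (Ioi 1) :=
  contOn_jT1.mono (Ioi_subset_Ioi zero_le_one)
lemma contOn_jT2' : ContinuousOn jT2 (Ioi 1) :=
  contOn_jT2.mono (Ioi_subset_Ioi zero_le_one)

lemma integrableOn_aux {c : ℝ} {f : ℝ → ℝ} (hf : ContinuousOn f (Ioi 1)) {C : ℝ}
    (hb : ∀ u : ℝ, 1 ≤ u → |f u| ≤ C * rexp (-u)) :
    IntegrableOn (fun u : ℝ ↦ u ^ c * f u) (Ioi 1) := by
  set m : ℝ := max (c + 1) 1 with hm_def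
  have hm : (0:ℝ) < m := lt_of_lt_of_le one_pos (le_max_right _ _)
  have hint : IntegrableOn (fun x : ℝ ↦ rexp (-x) * x ^ (m - 1)) (Ioi 1) :=
    (Real.GammaIntegral_convergent hm).mono_set (Ioi_subset_Ioi zero_le_one)
  have hmeas : AEStronglyMeasurable (fun u : ℝ ↦ u ^ c * f u) (volume.restrict (Ioi 1)) := by
    apply ContinuousOn.aestronglyMeasurable _ measurableSet_Ioi
    exact (continuousOn_id.rpow_const fun x hx ↦
      Or.inl (ne_of_gt (lt_trans one_pos hx))).mul hf
  refine Integrable.mono' (hint.const_mul |C|) hmeas ?_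
  filter_upwards [ae_restrict_mem measurableSet_Ioi] with x hx
  have hx1 : (1:ℝ) ≤ x := (mem_Ioi.mp hx).le
  have hx0 : (0:ℝ) < x := lt_of_lt_of_le one_pos hx1
  have h1 : |f x| ≤ |C| * rexp (-x) :=
    le_trans (hb x hx1) (mul_le_mul_of_nonneg_right (le_abs_self C) (Real.exp_nonneg _))
  have h2 : x ^ c ≤ x ^ (m - 1) :=
    Real.rpow_le_rpow_of_exponent_le hx1 (by
      have := le_max_left (c + 1) (1:ℝ)
      rw [hm_def]
      linarith)
  calc ‖x ^ c * f x‖ = x ^ c * |f x| := by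
        rw [Real.norm_eq_abs, abs_mul, abs_of_nonneg (Real.rpow_nonneg hx0.le _)]
    _ ≤ x ^ (m - 1) * (|C| * rexp (-x)) := by
        apply mul_le_mul h2 h1 (abs_nonneg _) (Real.rpow_nonneg hx0.le _)
    _ = |C| * (rexp (-x) * x ^ (m - 1)) := by ring

lemma bound_mul {f g : ℝ → ℝ} {C D : ℝ}
    (hf : ∀ u:ℝ, 1 ≤ u → |f u| ≤ C * rexp (-u)) (hg : ∀ u:ℝ, 1 ≤ u → |g u| ≤ D) :
    ∀ u:ℝ, 1 ≤ u → |f u * g u| ≤ (C * D) * rexp (-u) := by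
  intro u hu
  have h1 := hf u hu
  have h0 : (0:ℝ) ≤ C * rexp (-u) := le_trans (abs_nonneg _) h1
  rw [abs_mul]
  calc |f u| * |g u| ≤ (C * rexp (-u)) * D :=
        mul_le_mul h1 (hg u hu) (abs_nonneg _) h0
    _ = (C * D) * rexp (-u) := by ring

lemma exp_le_one' {u : ℝ} (hu : 1 ≤ u) : rexp (-u) ≤ 1 :=
  Real.exp_le_one_iff.mpr (by linarith)

lemma jT1_const_bound : ∀ u:ℝ, 1 ≤ u → |jT1 u| ≤ Ck 1 := fun u hu ↦
  le_trans (jT1_bound hu) (by nlinarith [Ck_nonneg 1, exp_le_one' hu, Real.exp_nonneg (-u)])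

lemma jT2_const_bound : ∀ u:ℝ, 1 ≤ u → |jT2 u| ≤ Ck 2 := fun u hu ↦
  le_trans (jT2_bound hu) (by nlinarith [Ck_nonneg 2, exp_le_one' hu, Real.exp_nonneg (-u)])

lemma jTheta_const_bound : ∀ u:ℝ, 1 ≤ u → |jTheta u| ≤ 1 + Ck 0 := fun _ hu ↦ jTheta_abs_bound hu

lemma jTheta_sq_sub_one_bound : ∀ u:ℝ, 1 ≤ u → |jTheta u ^ 2 - 1| ≤ (Ck 0 * (2 + Ck 0)) * rexp (-u) := by
  intro u hu
  have h : jTheta u ^ 2 - 1 = (jTheta u - 1) * (jTheta u + 1) := by ring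
  rw [h]
  refine bound_mul (g := fun v ↦ jTheta v + 1) (D := 2 + Ck 0) (fun v hv ↦ jTheta_sub_one_bound hv) (fun v hv ↦ ?_) u hu
  calc |jTheta v + 1| ≤ |jTheta v| + 1 := by
        calc |jTheta v + 1| ≤ |jTheta v| + |1| := abs_add_le _ _
          _ = |jTheta v| + 1 := by rw [abs_one]
    _ ≤ 2 + Ck 0 := by linarith [jTheta_abs_bound hv]

lemma integrableOn_T22 (c : ℝ) : IntegrableOn (fun u:ℝ ↦ u ^ c * jT2 u ^ 2) (Ioi 1) := by
  refine integrableOn_aux (contOn_jT2'.pow 2) (C := Ck 2 * Ck 2) fun u hu ↦ ?_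
  rw [sq]
  exact bound_mul (fun v hv ↦ jT2_bound hv) jT2_const_bound u hu

lemma integrableOn_T12 (c : ℝ) : IntegrableOn (fun u:ℝ ↦ u ^ c * (jT1 u * jT2 u)) (Ioi 1) :=
  integrableOn_aux (contOn_jT1'.mul contOn_jT2') (C := Ck 1 * Ck 2)
    (bound_mul (fun v hv ↦ jT1_bound hv) jT2_const_bound)

lemma integrableOn_T02 (c : ℝ) : IntegrableOn (fun u:ℝ ↦ u ^ c * (jTheta u * jT2 u)) (Ioi 1) := by
  refine integrableOn_aux (contOn_jTheta'.mul contOn_jT2') (C := Ck 2 * (1 + Ck 0)) fun u hu ↦ ?_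
  rw [mul_comm (jTheta u)]
  exact bound_mul (fun v hv ↦ jT2_bound hv) jTheta_const_bound u hu

lemma integrableOn_T01 (c : ℝ) : IntegrableOn (fun u:ℝ ↦ u ^ c * (jTheta u * jT1 u)) (Ioi 1) := by
  refine integrableOn_aux (contOn_jTheta'.mul contOn_jT1') (C := Ck 1 * (1 + Ck 0)) fun u hu ↦ ?_
  rw [mul_comm (jTheta u)]
  exact bound_mul (fun v hv ↦ jT1_bound hv) jTheta_const_bound u hu

lemma integrableOn_T11 (c : ℝ) : IntegrableOn (fun u:ℝ ↦ u ^ c * jT1 u ^ 2) (Ioi 1) := by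
  refine integrableOn_aux (contOn_jT1'.pow 2) (C := Ck 1 * Ck 1) fun u hu ↦ ?_
  rw [sq]
  exact bound_mul (fun v hv ↦ jT1_bound hv) jT1_const_bound u hu

lemma integrableOn_T00 (c : ℝ) : IntegrableOn (fun u:ℝ ↦ u ^ c * (jTheta u ^ 2 - 1)) (Ioi 1) :=
  integrableOn_aux (((contOn_jTheta'.pow 2).sub continuousOn_const))
    jTheta_sq_sub_one_bound

lemma inv_image_Ioi : Inv.inv '' (Ioi (1:ℝ)) = Ioo (0:ℝ) 1 := by
  ext y
  constructor
  · rintro ⟨x, hx, rfl⟩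
    have hx1 : (1:ℝ) < x := hx
    exact ⟨inv_pos.mpr (lt_trans one_pos hx1), inv_lt_one_of_one_lt₀ hx1⟩
  · rintro ⟨hy0, hy1⟩
    exact ⟨y⁻¹, one_lt_inv_iff₀.mpr ⟨hy0, hy1⟩, inv_inv y⟩

lemma rpow_half_nat' {x : ℝ} (hx : 0 < x) (k : ℕ) :
    x ^ ((k:ℝ)/2) = (x ^ ((1:ℝ)/2))^k := by
  rw [← Real.rpow_natCast (x ^ ((1:ℝ)/2)) k, ← Real.rpow_mul hx.le]
  congr 1
  ring

lemma key_identity (s : ℝ) {x : ℝ} (hx1 : 1 < x) :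
    |(-(x^2)⁻¹)| * ((x⁻¹) ^ (s/2+3) * jT2 x⁻¹ ^ 2)
      = x ^ (-s/2+4) * jT2 x ^ 2 + 6 * (x ^ (-s/2+3) * (jT1 x * jT2 x))
        + (3/2) * (x ^ (-s/2+2) * (jTheta x * jT2 x))
        + (9/2) * (x ^ (-s/2+1) * (jTheta x * jT1 x))
        + 9 * (x ^ (-s/2+2) * jT1 x ^ 2)
        + (9/16) * (x ^ (-s/2) * (jTheta x ^ 2 - 1))
        + (9/16) * x ^ (-s/2) := by
  have hx : (0:ℝ) < x := lt_trans one_pos hx1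
  set B : ℝ := x ^ ((1:ℝ)/2) with hB_def
  have hB : B ≠ 0 := by rw [hB_def]; positivity
  set P : ℝ := x ^ (-s/2) with hP_def
  have hinv : ∀ k : ℕ, (x⁻¹) ^ (-((k:ℝ))/2) = B^k := by
    intro k
    rw [Real.inv_rpow hx.le, show (-((k:ℝ))/2) = -((k:ℝ)/2) by ring,
      Real.rpow_neg hx.le, inv_inv, rpow_half_nat' hx]
  have hT2inv : jT2 x⁻¹ = (3/4) * B^5 * jTheta x + 3 * B^7 * jT1 x + B^9 * jT2 x := by
    have h := jT2_funEq (inv_pos.mpr hx)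
    rw [inv_inv] at h
    rw [h, show (-(5:ℝ)/2) = -(((5:ℕ):ℝ))/2 by norm_num,
      show (-(7:ℝ)/2) = -(((7:ℕ):ℝ))/2 by norm_num,
      show (-(9:ℝ)/2) = -(((9:ℕ):ℝ))/2 by norm_num, hinv, hinv, hinv]
  have hLpow : (x⁻¹) ^ (s/2+3) = P * (B^6)⁻¹ := by
    rw [Real.inv_rpow hx.le, ← Real.rpow_neg hx.le,
      show (-(s/2+3)) = -s/2 + -(((6:ℕ):ℝ)/2) by push_cast; ring,
      Real.rpow_add hx, Real.rpow_neg hx.le, rpow_half_nat' hx, hP_def]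
  have habs : |(-(x^2)⁻¹)| = (B^4)⁻¹ := by
    rw [abs_neg, abs_inv, abs_of_nonneg (sq_nonneg x)]
    congr 1
    rw [← Real.rpow_natCast x 2, show (((2:ℕ)):ℝ) = ((4:ℕ):ℝ)/2 by norm_num,
      rpow_half_nat' hx, hB_def]
  have hpow : ∀ k : ℕ, x ^ (-s/2 + (k:ℝ)) = P * B^(2*k) := by
    intro k
    rw [Real.rpow_add hx, hP_def]
    congr 1
    rw [show ((k:ℝ)) = (((2*k:ℕ)):ℝ)/2 by push_cast; ring, rpow_half_nat' hx]
  rw [habs, hLpow, hT2inv,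
    show (-s/2+4) = -s/2 + ((4:ℕ):ℝ) by norm_num,
    show (-s/2+3) = -s/2 + ((3:ℕ):ℝ) by norm_num,
    show (-s/2+2) = -s/2 + ((2:ℕ):ℝ) by norm_num,
    show (-s/2+1) = -s/2 + ((1:ℕ):ℝ) by norm_num,
    hpow, hpow, hpow, hpow]
  field_simp
  ring
/-- For every real `s > 2`, the splitting of `∫₀^∞ u^{s/2+3} θ''(u)² du` into
integrals over `(1,∞)` plus the pole term `9/(8(s-2))`. -/
theorem I3_split (s : ℝ) (hs : 2 < s) :
    (∫ u in Set.Ioi (0 : ℝ), u ^ (s / 2 + 3) * (deriv (deriv jTheta) u) ^ 2)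
      = 9 / (8 * (s - 2))
        + (∫ u in Set.Ioi (1 : ℝ), u ^ (s / 2 + 3) * (deriv (deriv jTheta) u) ^ 2)
        + (∫ u in Set.Ioi (1 : ℝ), u ^ (-s / 2 + 4) * (deriv (deriv jTheta) u) ^ 2)
        + 6 * (∫ u in Set.Ioi (1 : ℝ),
            u ^ (-s / 2 + 3) * (deriv jTheta u * deriv (deriv jTheta) u))
        + (3 / 2) * (∫ u in Set.Ioi (1 : ℝ),
            u ^ (-s / 2 + 2) * (jTheta u * deriv (deriv jTheta) u))
        + (9 / 2) * (∫ u in Set.Ioi (1 : ℝ),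
            u ^ (-s / 2 + 1) * (jTheta u * deriv jTheta u))
        + 9 * (∫ u in Set.Ioi (1 : ℝ), u ^ (-s / 2 + 2) * (deriv jTheta u) ^ 2)
        + (9 / 16) * ∫ u in Set.Ioi (1 : ℝ), u ^ (-s / 2) * ((jTheta u) ^ 2 - 1) := by
  have hsub : Ioi (1:ℝ) ⊆ Ioi 0 := Ioi_subset_Ioi zero_le_one
  have hsneg : -s/2 < -1 := by linarith
  -- rewrite all integrands in terms of jT1, jT2
  have e0 : (∫ u in Ioi (0:ℝ), u ^ (s/2+3) * (deriv (deriv jTheta) u) ^ 2)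
      = ∫ u in Ioi (0:ℝ), u ^ (s/2+3) * jT2 u ^ 2 :=
    setIntegral_congr_fun measurableSet_Ioi fun x hx ↦ by rw [deriv2_jTheta_eq (mem_Ioi.mp hx)]
  have e1 : (∫ u in Ioi (1:ℝ), u ^ (s/2+3) * (deriv (deriv jTheta) u) ^ 2)
      = ∫ u in Ioi (1:ℝ), u ^ (s/2+3) * jT2 u ^ 2 :=
    setIntegral_congr_fun measurableSet_Ioi fun x hx ↦ by
      rw [deriv2_jTheta_eq (mem_Ioi.mp (hsub hx))]
  have e2 : (∫ u in Ioi (1:ℝ), u ^ (-s/2+4) * (deriv (deriv jTheta) u) ^ 2)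
      = ∫ u in Ioi (1:ℝ), u ^ (-s/2+4) * jT2 u ^ 2 :=
    setIntegral_congr_fun measurableSet_Ioi fun x hx ↦ by
      rw [deriv2_jTheta_eq (mem_Ioi.mp (hsub hx))]
  have e3 : (∫ u in Ioi (1:ℝ), u ^ (-s/2+3) * (deriv jTheta u * deriv (deriv jTheta) u))
      = ∫ u in Ioi (1:ℝ), u ^ (-s/2+3) * (jT1 u * jT2 u) :=
    setIntegral_congr_fun measurableSet_Ioi fun x hx ↦ by
      rw [deriv2_jTheta_eq (mem_Ioi.mp (hsub hx)), deriv_jTheta_eqOn (hsub hx)]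
  have e4 : (∫ u in Ioi (1:ℝ), u ^ (-s/2+2) * (jTheta u * deriv (deriv jTheta) u))
      = ∫ u in Ioi (1:ℝ), u ^ (-s/2+2) * (jTheta u * jT2 u) :=
    setIntegral_congr_fun measurableSet_Ioi fun x hx ↦ by
      rw [deriv2_jTheta_eq (mem_Ioi.mp (hsub hx))]
  have e5 : (∫ u in Ioi (1:ℝ), u ^ (-s/2+1) * (jTheta u * deriv jTheta u))
      = ∫ u in Ioi (1:ℝ), u ^ (-s/2+1) * (jTheta u * jT1 u) :=
    setIntegral_congr_fun measurableSet_Ioi fun x hx ↦ by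
      rw [deriv_jTheta_eqOn (hsub hx)]
  have e6 : (∫ u in Ioi (1:ℝ), u ^ (-s/2+2) * (deriv jTheta u) ^ 2)
      = ∫ u in Ioi (1:ℝ), u ^ (-s/2+2) * jT1 u ^ 2 :=
    setIntegral_congr_fun measurableSet_Ioi fun x hx ↦ by
      rw [deriv_jTheta_eqOn (hsub hx)]
  rw [e0, e1, e2, e3, e4, e5, e6]
  -- change of variables on (0,1)
  set F : ℝ → ℝ := fun u ↦ u ^ (s/2+3) * jT2 u ^ 2 with hF
  have hderiv : ∀ x ∈ Ioi (1:ℝ), HasDerivWithinAt Inv.inv (-(x^2)⁻¹) (Ioi 1) x :=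
    fun x hx ↦ (hasDerivAt_inv (ne_of_gt (lt_trans one_pos (mem_Ioi.mp hx)))).hasDerivWithinAt
  have hinj : InjOn Inv.inv (Ioi (1:ℝ)) := fun a _ b _ h ↦ inv_injective h
  have himg := integral_image_eq_integral_abs_deriv_smul measurableSet_Ioi hderiv hinj F
  rw [inv_image_Ioi] at himg
  set H : ℝ → ℝ := fun x ↦ x ^ (-s/2+4) * jT2 x ^ 2 + 6 * (x ^ (-s/2+3) * (jT1 x * jT2 x))
      + (3/2) * (x ^ (-s/2+2) * (jTheta x * jT2 x))
      + (9/2) * (x ^ (-s/2+1) * (jTheta x * jT1 x))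
      + 9 * (x ^ (-s/2+2) * jT1 x ^ 2)
      + (9/16) * (x ^ (-s/2) * (jTheta x ^ 2 - 1))
      + (9/16) * x ^ (-s/2) with hH
  have hEqOn : EqOn (fun x : ℝ ↦ |(-(x^2)⁻¹)| • F x⁻¹) H (Ioi 1) := fun x hx ↦ by
    simpa [hF, hH, smul_eq_mul] using key_identity s (mem_Ioi.mp hx)
  rw [setIntegral_congr_fun measurableSet_Ioi hEqOn] at himg
  -- integrability of pieces
  have h2 := integrableOn_T22 (-s/2+4)
  have h3 := (integrableOn_T12 (-s/2+3)).const_mul (6:ℝ)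
  have h4 := (integrableOn_T02 (-s/2+2)).const_mul ((3:ℝ)/2)
  have h5 := (integrableOn_T01 (-s/2+1)).const_mul ((9:ℝ)/2)
  have h6 := (integrableOn_T11 (-s/2+2)).const_mul (9:ℝ)
  have h7 := (integrableOn_T00 (-s/2)).const_mul ((9:ℝ)/16)
  have h8 : IntegrableOn (fun x:ℝ ↦ x ^ (-s/2)) (Ioi 1) :=
    integrableOn_Ioi_rpow_of_lt hsneg one_pos
  have h8' := h8.const_mul ((9:ℝ)/16)
  have h23 : IntegrableOn (fun x:ℝ ↦ x ^ (-s/2+4) * jT2 x ^ 2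
      + 6 * (x ^ (-s/2+3) * (jT1 x * jT2 x))) (Ioi 1) := h2.add h3
  have h234 : IntegrableOn (fun x:ℝ ↦ x ^ (-s/2+4) * jT2 x ^ 2
      + 6 * (x ^ (-s/2+3) * (jT1 x * jT2 x))
      + (3/2) * (x ^ (-s/2+2) * (jTheta x * jT2 x))) (Ioi 1) := h23.add h4
  have h2345 : IntegrableOn (fun x:ℝ ↦ x ^ (-s/2+4) * jT2 x ^ 2
      + 6 * (x ^ (-s/2+3) * (jT1 x * jT2 x))
      + (3/2) * (x ^ (-s/2+2) * (jTheta x * jT2 x))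
      + (9/2) * (x ^ (-s/2+1) * (jTheta x * jT1 x))) (Ioi 1) := h234.add h5
  have h23456 : IntegrableOn (fun x:ℝ ↦ x ^ (-s/2+4) * jT2 x ^ 2
      + 6 * (x ^ (-s/2+3) * (jT1 x * jT2 x))
      + (3/2) * (x ^ (-s/2+2) * (jTheta x * jT2 x))
      + (9/2) * (x ^ (-s/2+1) * (jTheta x * jT1 x))
      + 9 * (x ^ (-s/2+2) * jT1 x ^ 2)) (Ioi 1) := h2345.add h6
  have h234567 : IntegrableOn (fun x:ℝ ↦ x ^ (-s/2+4) * jT2 x ^ 2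
      + 6 * (x ^ (-s/2+3) * (jT1 x * jT2 x))
      + (3/2) * (x ^ (-s/2+2) * (jTheta x * jT2 x))
      + (9/2) * (x ^ (-s/2+1) * (jTheta x * jT1 x))
      + 9 * (x ^ (-s/2+2) * jT1 x ^ 2)
      + (9/16) * (x ^ (-s/2) * (jTheta x ^ 2 - 1))) (Ioi 1) := h23456.add h7
  have hHint : IntegrableOn H (Ioi 1) := by
    rw [hH]
    exact h234567.add h8'
  -- split ∫ H
  have hHsum : ∫ x in Ioi (1:ℝ), H x
      = (∫ x in Ioi (1:ℝ), x ^ (-s/2+4) * jT2 x ^ 2)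
        + 6 * (∫ x in Ioi (1:ℝ), x ^ (-s/2+3) * (jT1 x * jT2 x))
        + (3/2) * (∫ x in Ioi (1:ℝ), x ^ (-s/2+2) * (jTheta x * jT2 x))
        + (9/2) * (∫ x in Ioi (1:ℝ), x ^ (-s/2+1) * (jTheta x * jT1 x))
        + 9 * (∫ x in Ioi (1:ℝ), x ^ (-s/2+2) * jT1 x ^ 2)
        + (9/16) * (∫ x in Ioi (1:ℝ), x ^ (-s/2) * (jTheta x ^ 2 - 1))
        + (9/16) * ∫ x in Ioi (1:ℝ), x ^ (-s/2) := by
    rw [hH]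
    rw [integral_add h234567 h8', integral_add h23456 h7, integral_add h2345 h6,
      integral_add h234 h5, integral_add h23 h4, integral_add h2 h3,
      integral_const_mul, integral_const_mul, integral_const_mul, integral_const_mul,
      integral_const_mul, integral_const_mul]
  -- integrability of F on (0,1] and the splitting of the full integral
  have hIoo : IntegrableOn F (Ioo 0 1) := by
    rw [← inv_image_Ioi,
      integrableOn_image_iff_integrableOn_abs_deriv_smul measurableSet_Ioi hderiv hinj]
    exact hHint.congr_fun hEqOn.symm measurableSet_Ioi
  have hI1 : IntegrableOn F (Ioi 1) := integrableOn_T22 _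
  have hsplit : (∫ u in Ioi (0:ℝ), F u) = (∫ u in Ioo (0:ℝ) 1, F u) + ∫ u in Ioi (1:ℝ), F u := by
    rw [← Ioc_union_Ioi_eq_Ioi (zero_le_one (α := ℝ)),
      setIntegral_union (Ioc_disjoint_Ioi le_rfl) measurableSet_Ioi
        ((integrableOn_Ioc_iff_integrableOn_Ioo).mpr hIoo) hI1,
      integral_Ioc_eq_integral_Ioo]
  -- the pole term
  have hpole : (∫ x in Ioi (1:ℝ), x ^ (-s/2)) = 2/(s-2) := by
    rw [integral_Ioi_rpow_of_lt hsneg one_pos, Real.one_rpow]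
    rw [div_eq_div_iff (by intro h; linarith [h] : -s/2 + 1 ≠ 0) (by intro h; linarith [h] : s - 2 ≠ 0)]
    ring
  have hcoef : (9:ℝ)/16 * (2/(s-2)) = 9/(8*(s-2)) := by
    have h2s : s - 2 ≠ 0 := by linarith
    field_simp
    ring
  calc (∫ u in Ioi (0:ℝ), F u) = (∫ u in Ioo (0:ℝ) 1, F u) + ∫ u in Ioi (1:ℝ), F u := hsplit
    _ = _ := by
      rw [himg, hHsum, hpole, hcoef]
      ring
end

section
/- ∫₁^∞ u^{−1/2}(θ(u)² − 1) du = 4π^{−1/2} [ ∑_{n₁=1}^∞ ∑_{n₂=1}^∞ (n₁²+n₂²)^{−1/2} Γ(1/2, π(n₁²+n₂²)) + ∑_{n=1}^∞ n^{−1} Γ(1/2, πn²) ], and both double and single series on the right converge absolutely. -/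
open MeasureTheory Set Real

/-- The incomplete gamma function of the second kind
`Γ(z,p) = ∫_p^∞ t^{z-1} e^{-t} dt`. -/
noncomputable def iGamma (z p : ℝ) : ℝ :=
  ∫ t in Set.Ioi p, t ^ (z - 1) * Real.exp (-t)

/- ### Auxiliary lemmas -/

lemma iGamma_half_nonneg {p : ℝ} (hp : 0 < p) : 0 ≤ iGamma (1/2) p := by
  apply setIntegral_nonneg measurableSet_Ioi
  intro t ht
  have h0 : (0:ℝ) < t := hp.trans ht
  positivity

lemma integrableOn_rpow_exp {p : ℝ} (hp : 0 < p) :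
    IntegrableOn (fun t : ℝ => t ^ ((1:ℝ)/2 - 1) * Real.exp (-t)) (Ioi p) := by
  apply Integrable.mono' (g := fun t : ℝ => (max 1 p⁻¹) * Real.exp (-t))
  · have h := exp_neg_integrableOn_Ioi p (one_pos : (0:ℝ) < 1)
    simp only [neg_one_mul] at h
    exact h.const_mul _
  · apply Measurable.aestronglyMeasurable
    fun_prop
  · filter_upwards [ae_restrict_mem measurableSet_Ioi] with t ht
    have h0 : (0:ℝ) < t := hp.trans ht
    rw [norm_mul, norm_of_nonneg (exp_nonneg _), norm_of_nonneg (rpow_nonneg h0.le _)]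
    apply mul_le_mul_of_nonneg_right _ (exp_nonneg _)
    rcases le_total 1 t with h1 | h1
    · calc t ^ ((1:ℝ)/2 - 1) ≤ 1 := by
            apply Real.rpow_le_one_of_one_le_of_nonpos h1 (by norm_num)
        _ ≤ max 1 p⁻¹ := le_max_left _ _
    · calc t ^ ((1:ℝ)/2 - 1) ≤ t ^ (-1 : ℝ) := by
            apply Real.rpow_le_rpow_of_exponent_ge h0 h1 (by norm_num)
        _ = t⁻¹ := by rw [Real.rpow_neg_one]
        _ ≤ p⁻¹ := by exact inv_anti₀ hp ht.le
        _ ≤ max 1 p⁻¹ := le_max_right _ _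

lemma iGamma_half_le {p : ℝ} (hp : 1 ≤ p) : iGamma (1/2) p ≤ Real.exp (-p) := by
  have h0 : (0:ℝ) < p := lt_of_lt_of_le one_pos hp
  rw [iGamma, ← integral_exp_neg_Ioi p]
  apply setIntegral_mono_on (integrableOn_rpow_exp h0)
    (by have h := exp_neg_integrableOn_Ioi p (one_pos : (0:ℝ) < 1);
        simpa only [neg_one_mul] using h) measurableSet_Ioi
  intro t ht
  have h1 : (1:ℝ) ≤ t := hp.trans ht.le
  calc t ^ ((1:ℝ)/2 - 1) * Real.exp (-t) ≤ 1 * Real.exp (-t) := by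
        apply mul_le_mul_of_nonneg_right _ (exp_nonneg _)
        exact Real.rpow_le_one_of_one_le_of_nonpos h1 (by norm_num)
    _ = Real.exp (-t) := one_mul _

lemma key_integral {c : ℝ} (hc : 0 < c) :
    ∫ u in Ioi (1:ℝ), u ^ (-(1:ℝ)/2) * Real.exp (-(c * u))
      = c ^ (-(1:ℝ)/2) * iGamma (1/2) c := by
  have h := integral_comp_mul_left_Ioi (fun t => t ^ ((1:ℝ)/2 - 1) * Real.exp (-t)) 1 hc
  simp only [smul_eq_mul, mul_one] at h
  have h2 : ∀ u ∈ Ioi (1:ℝ), u ^ (-(1:ℝ)/2) * Real.exp (-(c*u))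
      = c ^ ((1:ℝ)/2) * ((c*u) ^ ((1:ℝ)/2 - 1) * Real.exp (-(c*u))) := by
    intro u hu
    have hu0 : (0:ℝ) < u := lt_trans one_pos hu
    rw [Real.mul_rpow hc.le hu0.le]
    have hcc : c ^ ((1:ℝ)/2) * c ^ ((1:ℝ)/2 - 1) = 1 := by
      rw [← Real.rpow_add hc]
      norm_num
    have huu : u ^ ((1:ℝ)/2 - 1) = u ^ (-(1:ℝ)/2) := by norm_num
    calc u ^ (-(1:ℝ)/2) * Real.exp (-(c*u))
        = (c ^ ((1:ℝ)/2) * c ^ ((1:ℝ)/2 - 1)) * u ^ (-(1:ℝ)/2) * Real.exp (-(c*u)) := by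
          rw [hcc, one_mul]
      _ = c ^ ((1:ℝ)/2) * (c ^ ((1:ℝ)/2 - 1) * u ^ ((1:ℝ)/2 - 1) * Real.exp (-(c*u))) := by
          rw [huu]; ring
  rw [setIntegral_congr_fun measurableSet_Ioi h2, integral_const_mul, h, iGamma]
  rw [← mul_assoc]
  congr 1
  rw [← Real.rpow_neg_one c, ← Real.rpow_add hc]
  norm_num

lemma summable_exp_nat {u : ℝ} (hu : 0 < u) :
    Summable fun n : ℕ => Real.exp (-Real.pi * (n:ℝ)^2 * u) := by
  have hsum : Summable fun n : ℕ => Real.exp (-(Real.pi * u)) ^ n := by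
    apply summable_geometric_of_lt_one (exp_nonneg _)
    rw [Real.exp_lt_one_iff]
    nlinarith [Real.pi_pos]
  apply Summable.of_nonneg_of_le (fun n => exp_nonneg _) _ hsum
  intro n
  rw [← Real.exp_nat_mul]
  apply Real.exp_le_exp.2
  have h1 : (n:ℝ) ≤ (n:ℝ)^2 := by
    rcases Nat.eq_zero_or_pos n with h | h
    · simp [h]
    · have h2 : (1:ℝ) ≤ (n:ℝ) := by exact_mod_cast h
      nlinarith
  nlinarith [Real.pi_pos, mul_le_mul_of_nonneg_right h1 (mul_pos Real.pi_pos hu).le]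

lemma summable_exp_int {u : ℝ} (hu : 0 < u) :
    Summable fun n : ℤ => Real.exp (-Real.pi * (n:ℝ)^2 * u) := by
  apply Summable.of_nat_of_neg_add_one
  · exact_mod_cast summable_exp_nat hu
  · have h := (summable_exp_nat hu).comp_injective (add_left_injective 1)
    apply h.congr
    intro n
    simp only [Function.comp_apply]
    push_cast
    ring_nf

lemma tsum_int_even {f : ℤ → ℝ} (hf : Summable f) (he : ∀ n : ℤ, f (-n) = f n) :
    ∑' n : ℤ, f n = f 0 + 2 * ∑' n : ℕ+, f ((n:ℕ):ℤ) := by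
  have h1 : Summable fun n : ℕ => f n :=
    hf.comp_injective (fun a b h => by exact_mod_cast h : Function.Injective (Nat.cast : ℕ → ℤ))
  have h1' : Summable fun n : ℕ => f ((n:ℤ) + 1) := by
    have := h1.comp_injective (add_left_injective 1)
    apply this.congr
    intro n; simp only [Function.comp_apply]; push_cast; ring_nf
  have h2 : Summable fun n : ℕ => f (-((n:ℤ) + 1)) := by
    apply h1'.congr; intro n; rw [he]
  rw [tsum_of_nat_of_neg_add_one h1 h2]
  have e2 : ∑' n : ℕ, f (-((n:ℤ) + 1)) = ∑' n : ℕ, f ((n:ℤ) + 1) :=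
    tsum_congr fun n => he _
  have e1 : ∑' n : ℕ, f n = f 0 + ∑' n : ℕ, f ((n:ℤ) + 1) := by
    rw [Summable.tsum_eq_zero_add h1]
    simp only [Nat.cast_zero, Nat.cast_add, Nat.cast_one]
  have e3 : ∑' n : ℕ+, f ((n:ℕ):ℤ) = ∑' n : ℕ, f ((n:ℤ) + 1) := by
    rw [← Equiv.pnatEquivNat.symm.tsum_eq (fun n : ℕ+ => f ((n:ℕ):ℤ))]
    apply tsum_congr
    intro n
    simp [Equiv.pnatEquivNat, Nat.succPNat]
  rw [e2, e1, e3]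
  ring

/- ### The main lattice-sum functions -/

noncomputable def Gfun (k : ℝ) : ℝ :=
  (Real.pi * k) ^ (-(1:ℝ)/2) * iGamma (1/2) (Real.pi * k)

noncomputable def Hfun (p : ℤ × ℤ) : ℝ :=
  if p = 0 then 0 else Gfun ((p.1:ℝ)^2 + (p.2:ℝ)^2)

lemma int_sq_ge {m : ℤ} (hm : m ≠ 0) : 1 ≤ (m:ℝ)^2 := by
  have h := Int.one_le_abs hm
  have h' : (1:ℝ) ≤ |(m:ℝ)| := by
    rw [← Int.cast_abs]
    exact_mod_cast h
  nlinarith [sq_abs (m:ℝ), abs_nonneg (m:ℝ)]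

lemma one_le_k {p : ℤ × ℤ} (hp : p ≠ 0) : 1 ≤ (p.1:ℝ)^2 + (p.2:ℝ)^2 := by
  rcases Decidable.em (p.1 = 0) with h1 | h1
  · have h2 : p.2 ≠ 0 := by
      intro h2; exact hp (Prod.ext h1 h2)
    nlinarith [int_sq_ge h2, sq_nonneg ((p.1:ℝ))]
  · nlinarith [int_sq_ge h1, sq_nonneg ((p.2:ℝ))]

lemma one_le_pi_mul {k : ℝ} (hk : 1 ≤ k) : 1 ≤ Real.pi * k := by
  nlinarith [Real.pi_gt_three]

lemma Gfun_nonneg {k : ℝ} (hk : 0 < k) : 0 ≤ Gfun k :=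
  mul_nonneg (rpow_nonneg (mul_pos Real.pi_pos hk).le _)
    (iGamma_half_nonneg (mul_pos Real.pi_pos hk))

lemma Gfun_le {k : ℝ} (hk : 1 ≤ k) : Gfun k ≤ Real.exp (-(Real.pi * k)) := by
  have h1 : 1 ≤ Real.pi * k := one_le_pi_mul hk
  have h0 : 0 < Real.pi * k := lt_of_lt_of_le one_pos h1
  calc Gfun k ≤ 1 * Real.exp (-(Real.pi * k)) := by
        apply mul_le_mul (Real.rpow_le_one_of_one_le_of_nonpos h1 (by norm_num))
          (iGamma_half_le h1) (iGamma_half_nonneg h0) one_pos.le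
    _ = Real.exp (-(Real.pi * k)) := one_mul _

lemma term_nonneg {k : ℝ} (hk : 0 < k) :
    0 ≤ k ^ (-(1:ℝ)/2) * iGamma (1/2) (Real.pi * k) :=
  mul_nonneg (rpow_nonneg hk.le _) (iGamma_half_nonneg (mul_pos Real.pi_pos hk))

lemma term_le {k : ℝ} (hk : 1 ≤ k) :
    k ^ (-(1:ℝ)/2) * iGamma (1/2) (Real.pi * k) ≤ Real.exp (-(Real.pi * k)) := by
  have h1 : 1 ≤ Real.pi * k := one_le_pi_mul hk
  calc k ^ (-(1:ℝ)/2) * iGamma (1/2) (Real.pi * k) ≤ 1 * Real.exp (-(Real.pi * k)) :=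
        mul_le_mul (Real.rpow_le_one_of_one_le_of_nonpos hk (by norm_num))
          (iGamma_half_le h1) (iGamma_half_nonneg (lt_of_lt_of_le one_pos h1)) one_pos.le
    _ = Real.exp (-(Real.pi * k)) := one_mul _

lemma exp_split (a b : ℝ) :
    Real.exp (-(Real.pi * (a^2 + b^2)))
      = Real.exp (-Real.pi * a^2) * Real.exp (-Real.pi * b^2) := by
  rw [← Real.exp_add]; ring_nf

lemma expsq_int : Summable fun n : ℤ => Real.exp (-Real.pi * (n:ℝ)^2) := by
  simpa using summable_exp_int one_pos

lemma expsq_pnat : Summable fun n : ℕ+ => Real.exp (-Real.pi * (n:ℝ)^2) := by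
  have h : Summable fun n : ℕ => Real.exp (-Real.pi * (n:ℝ)^2) := by
    simpa using summable_exp_nat one_pos
  exact h.comp_injective PNat.coe_injective

lemma pnat_one_le (n : ℕ+) : (1:ℝ) ≤ (n:ℝ) := by exact_mod_cast n.one_le

lemma pnat_sq_one_le (q : ℕ+ × ℕ+) : (1:ℝ) ≤ (q.1:ℝ)^2 + (q.2:ℝ)^2 := by
  nlinarith [pnat_one_le q.1, pnat_one_le q.2]

lemma Hfun_abs_le (p : ℤ × ℤ) :
    |Hfun p| ≤ Real.exp (-Real.pi * (p.1:ℝ)^2) * Real.exp (-Real.pi * (p.2:ℝ)^2) := by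
  rcases Decidable.em (p = 0) with h | h
  · rw [Hfun, if_pos h, abs_zero]
    positivity
  · rw [Hfun, if_neg h, abs_of_nonneg (Gfun_nonneg (lt_of_lt_of_le one_pos (one_le_k h))),
      ← exp_split]
    exact Gfun_le (one_le_k h)

set_option maxHeartbeats 1000000 in
lemma summable_exp_prod_int :
    Summable fun p : ℤ × ℤ => Real.exp (-Real.pi * (p.1:ℝ)^2) * Real.exp (-Real.pi * (p.2:ℝ)^2) :=
  Summable.mul_of_nonneg expsq_int expsq_int
    (fun n => exp_nonneg _) (fun n => exp_nonneg _)

lemma summable_abs_Hfun : Summable fun p => |Hfun p| :=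
  Summable.of_nonneg_of_le (fun p => abs_nonneg _) Hfun_abs_le summable_exp_prod_int

lemma summable_Hfun : Summable Hfun := summable_abs_Hfun.of_abs

lemma summable_G_pnat_sq : Summable fun n : ℕ+ => Gfun ((n:ℝ)^2) := by
  have hle : ∀ n : ℕ+, Gfun ((n:ℝ)^2) ≤ Real.exp (-Real.pi * (n:ℝ)^2) := by
    intro n
    have h1 : (1:ℝ) ≤ (n:ℝ)^2 := by nlinarith [pnat_one_le n]
    calc Gfun ((n:ℝ)^2) ≤ Real.exp (-(Real.pi * (n:ℝ)^2)) := Gfun_le h1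
      _ = Real.exp (-Real.pi * (n:ℝ)^2) := by ring_nf
  exact Summable.of_nonneg_of_le
    (fun n => Gfun_nonneg (by nlinarith [pnat_one_le n])) hle expsq_pnat

set_option maxHeartbeats 1000000 in
lemma summable_G_pnat_prod :
    Summable fun q : ℕ+ × ℕ+ => Gfun ((q.1:ℝ)^2 + (q.2:ℝ)^2) := by
  have hle : ∀ q : ℕ+ × ℕ+, Gfun ((q.1:ℝ)^2 + (q.2:ℝ)^2)
      ≤ Real.exp (-Real.pi * (q.1:ℝ)^2) * Real.exp (-Real.pi * (q.2:ℝ)^2) := by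
    intro q
    rw [← exp_split]
    exact Gfun_le (pnat_sq_one_le q)
  exact Summable.of_nonneg_of_le
    (fun q => Gfun_nonneg (lt_of_lt_of_le one_pos (pnat_sq_one_le q))) hle
    (Summable.mul_of_nonneg expsq_pnat expsq_pnat
      (fun n => exp_nonneg _) (fun n => exp_nonneg _))

example : True := trivial

/- ### The integrand family -/

noncomputable def Ffun (p : ℤ × ℤ) (u : ℝ) : ℝ :=
  Real.exp (-(Real.pi * ((p.1:ℝ)^2 + (p.2:ℝ)^2)) * u)

lemma summable_Ffun {u : ℝ} (hu : 0 < u) : Summable fun p : ℤ × ℤ => Ffun p u := by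
  have h := Summable.mul_of_nonneg (summable_exp_int hu) (summable_exp_int hu)
    (fun n => exp_nonneg _) (fun n => exp_nonneg _)
  apply h.congr
  intro p
  rw [Ffun, ← Real.exp_add]
  congr 1
  ring

lemma theta_sq {u : ℝ} (hu : 0 < u) : jTheta u ^ 2 = ∑' p : ℤ × ℤ, Ffun p u := by
  have hs := summable_exp_int hu
  have hnorm : Summable fun n : ℤ => ‖Real.exp (-Real.pi * (n:ℝ)^2 * u)‖ := by
    simpa only [Real.norm_eq_abs, Real.abs_exp] using hs
  rw [jTheta, sq, tsum_mul_tsum_of_summable_norm hnorm hnorm]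
  apply tsum_congr
  intro p
  rw [Ffun, ← Real.exp_add]
  congr 1
  ring

lemma pointwise {u : ℝ} (hu : u ∈ Set.Ioi (1:ℝ)) :
    u ^ (-(1:ℝ)/2) * (jTheta u ^ 2 - 1)
      = ∑' p : ↥(({0} : Set (ℤ × ℤ))ᶜ), u ^ (-(1:ℝ)/2) * Ffun p u := by
  have hu0 : (0:ℝ) < u := lt_trans one_pos hu
  have hs := summable_Ffun hu0
  have hcompl := Summable.tsum_add_tsum_compl (f := fun p => Ffun p u) (s := ({0} : Set (ℤ × ℤ)))
    (hs.subtype ({0} : Set (ℤ × ℤ))) (hs.subtype (({0} : Set (ℤ × ℤ))ᶜ))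
  have h0 : ∑' x : ({0} : Set (ℤ × ℤ)), Ffun x u = 1 := by
    rw [tsum_singleton (0 : ℤ × ℤ) (fun p => Ffun p u)]
    simp [Ffun]
  rw [tsum_mul_left]
  rw [theta_sq hu0, ← hcompl, h0]
  ring

lemma F_integrable {p : ℤ × ℤ} (hp : p ≠ 0) :
    IntegrableOn (fun u : ℝ => u ^ (-(1:ℝ)/2) * Ffun p u) (Set.Ioi 1) := by
  have hc : 0 < Real.pi * ((p.1:ℝ)^2 + (p.2:ℝ)^2) :=
    mul_pos Real.pi_pos (lt_of_lt_of_le one_pos (one_le_k hp))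
  apply Integrable.mono' (exp_neg_integrableOn_Ioi 1 hc)
  · apply Measurable.aestronglyMeasurable
    unfold Ffun
    fun_prop
  · filter_upwards [ae_restrict_mem measurableSet_Ioi] with u hu
    have hu0 : (0:ℝ) < u := lt_trans one_pos hu
    rw [norm_mul, Ffun, norm_of_nonneg (exp_nonneg _),
      norm_of_nonneg (rpow_nonneg hu0.le _)]
    calc u ^ (-(1:ℝ)/2) * Real.exp (-(Real.pi * ((p.1:ℝ)^2 + (p.2:ℝ)^2)) * u)
        ≤ 1 * Real.exp (-(Real.pi * ((p.1:ℝ)^2 + (p.2:ℝ)^2)) * u) := by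
          apply mul_le_mul_of_nonneg_right _ (exp_nonneg _)
          exact Real.rpow_le_one_of_one_le_of_nonpos (le_of_lt hu) (by norm_num)
      _ = Real.exp (-(Real.pi * ((p.1:ℝ)^2 + (p.2:ℝ)^2)) * u) := one_mul _

lemma F_integral {p : ℤ × ℤ} (hp : p ≠ 0) :
    ∫ u in Set.Ioi (1:ℝ), u ^ (-(1:ℝ)/2) * Ffun p u
      = Gfun ((p.1:ℝ)^2 + (p.2:ℝ)^2) := by
  have hc : 0 < Real.pi * ((p.1:ℝ)^2 + (p.2:ℝ)^2) :=
    mul_pos Real.pi_pos (lt_of_lt_of_le one_pos (one_le_k hp))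
  have h := key_integral hc
  rw [Gfun, ← h]
  apply setIntegral_congr_fun measurableSet_Ioi
  intro u hu
  show u ^ (-(1:ℝ)/2) * Ffun p u = u ^ (-(1:ℝ)/2) * Real.exp (-(Real.pi * ((p.1:ℝ)^2 + (p.2:ℝ)^2) * u))
  rw [Ffun, neg_mul]

lemma F_norm_integral {p : ℤ × ℤ} (hp : p ≠ 0) :
    ∫ u in Set.Ioi (1:ℝ), ‖u ^ (-(1:ℝ)/2) * Ffun p u‖
      = Gfun ((p.1:ℝ)^2 + (p.2:ℝ)^2) := by
  rw [← F_integral hp]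
  apply setIntegral_congr_fun measurableSet_Ioi
  intro u hu
  have hu0 : (0:ℝ) < u := lt_trans one_pos hu
  show ‖u ^ (-(1:ℝ)/2) * Ffun p u‖ = u ^ (-(1:ℝ)/2) * Ffun p u
  rw [norm_mul, Ffun, norm_of_nonneg (exp_nonneg _), norm_of_nonneg (rpow_nonneg hu0.le _)]

example : True := trivial

/- ### Interchange of sum and integral -/

lemma mem_compl_ne (p : ↥(({0} : Set (ℤ × ℤ))ᶜ)) : (p : ℤ × ℤ) ≠ 0 := p.2

lemma integral_eq_tsum_G :
    (∫ u in Set.Ioi (1:ℝ), u ^ (-(1:ℝ)/2) * (jTheta u ^ 2 - 1))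
      = ∑' p : ↥(({0} : Set (ℤ × ℤ))ᶜ),
          Gfun (((p : ℤ × ℤ).1 : ℝ)^2 + ((p : ℤ × ℤ).2 : ℝ)^2) := by
  have hint : ∀ p : ↥(({0} : Set (ℤ × ℤ))ᶜ),
      Integrable (fun u : ℝ => u ^ (-(1:ℝ)/2) * Ffun p u) (volume.restrict (Set.Ioi 1)) :=
    fun p => F_integrable (mem_compl_ne p)
  have hsum : Summable fun p : ↥(({0} : Set (ℤ × ℤ))ᶜ) =>
      ∫ u in Set.Ioi (1:ℝ), ‖u ^ (-(1:ℝ)/2) * Ffun p u‖ := by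
    apply Summable.congr _ (fun p => (F_norm_integral (mem_compl_ne p)).symm)
    have hle : ∀ p : ↥(({0} : Set (ℤ × ℤ))ᶜ),
        Gfun (((p : ℤ × ℤ).1 : ℝ)^2 + ((p : ℤ × ℤ).2 : ℝ)^2)
          ≤ Real.exp (-Real.pi * ((p : ℤ × ℤ).1 : ℝ)^2)
            * Real.exp (-Real.pi * ((p : ℤ × ℤ).2 : ℝ)^2) := by
      intro p
      rw [← exp_split]
      exact Gfun_le (one_le_k (mem_compl_ne p))
    exact Summable.of_nonneg_of_le
      (fun p => Gfun_nonneg (lt_of_lt_of_le one_pos (one_le_k (mem_compl_ne p)))) hle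
      (summable_exp_prod_int.subtype _)
  have h := MeasureTheory.integral_tsum_of_summable_integral_norm hint hsum
  rw [setIntegral_congr_fun measurableSet_Ioi (fun u hu => pointwise hu), ← h]
  exact tsum_congr fun p => F_integral (mem_compl_ne p)

/- ### Reindexing the lattice sum -/

lemma heven2 (m n : ℤ) : Hfun (m, -n) = Hfun (m, n) := by
  simp [Hfun, Prod.ext_iff, neg_eq_zero]

lemma heven1 (m n : ℤ) : Hfun (-m, n) = Hfun (m, n) := by
  simp [Hfun, Prod.ext_iff, neg_eq_zero]

lemma Hfun_pnat_pnat (m n : ℕ+) :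
    Hfun (((m:ℕ):ℤ), ((n:ℕ):ℤ)) = Gfun ((m:ℝ)^2 + (n:ℝ)^2) := by
  rw [Hfun, if_neg]
  · push_cast
    rfl
  · rw [Prod.mk_eq_zero, not_and]
    intro h
    exact absurd h (by exact_mod_cast m.ne_zero)

lemma Hfun_pnat_zero (m : ℕ+) : Hfun (((m:ℕ):ℤ), 0) = Gfun ((m:ℝ)^2) := by
  rw [Hfun, if_neg]
  · push_cast
    norm_num
  · rw [Prod.mk_eq_zero, not_and]
    intro h
    exact absurd h (by exact_mod_cast m.ne_zero)

lemma Hfun_zero_pnat (n : ℕ+) : Hfun (0, ((n:ℕ):ℤ)) = Gfun ((n:ℝ)^2) := by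
  rw [Hfun, if_neg]
  · push_cast
    norm_num
  · rw [Prod.mk_eq_zero, not_and]
    intro h h2
    exact n.ne_zero (by exact_mod_cast h2)

lemma tsum_H_eq :
    (∑' p : ℤ × ℤ, Hfun p)
      = 4 * (∑' q : ℕ+ × ℕ+, Gfun ((q.1:ℝ)^2 + (q.2:ℝ)^2)) + 4 * ∑' n : ℕ+, Gfun ((n:ℝ)^2) := by
  have hH := summable_Hfun
  have hrow : ∀ m : ℤ, Summable fun n : ℤ => Hfun (m, n) := fun m => hH.prod_factor m
  set T : ℤ → ℝ := fun m => ∑' n : ℕ+, Hfun (m, ((n:ℕ):ℤ)) with hTdef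
  have hroweq : ∀ m : ℤ, ∑' n : ℤ, Hfun (m, n) = Hfun (m, 0) + 2 * T m :=
    fun m => tsum_int_even (hrow m) (fun n => heven2 m n)
  have hR : Summable fun m : ℤ => ∑' n : ℤ, Hfun (m, n) :=
    ⟨_, hH.hasSum.prod_fiberwise (fun m => (hrow m).hasSum)⟩
  have hH0 : Summable fun m : ℤ => Hfun (m, 0) :=
    hH.comp_injective (fun a b h => (Prod.ext_iff.1 h).1)
  have hTsum : Summable T := by
    have hTalt : T = fun m => ((∑' n : ℤ, Hfun (m, n)) - Hfun (m, 0)) / 2 := by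
      funext m
      rw [hroweq m]
      ring
    rw [hTalt]
    exact (hR.sub hH0).div_const 2
  have hfull : ∑' p : ℤ × ℤ, Hfun p = ∑' m : ℤ, ∑' n : ℤ, Hfun (m, n) := Summable.tsum_prod' hH hrow
  have hsplit : ∑' m : ℤ, ∑' n : ℤ, Hfun (m, n)
      = (∑' m : ℤ, Hfun (m, 0)) + 2 * ∑' m : ℤ, T m := by
    calc ∑' m : ℤ, ∑' n : ℤ, Hfun (m, n) = ∑' m : ℤ, (Hfun (m,0) + 2 * T m) :=
          tsum_congr hroweq
      _ = (∑' m : ℤ, Hfun (m,0)) + ∑' m : ℤ, 2 * T m := Summable.tsum_add hH0 (hTsum.mul_left 2)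
      _ = (∑' m : ℤ, Hfun (m,0)) + 2 * ∑' m : ℤ, T m := by rw [tsum_mul_left]
  have hcol : ∑' m : ℤ, Hfun (m, 0) = 2 * ∑' m : ℕ+, Gfun ((m:ℝ)^2) := by
    rw [tsum_int_even hH0 (fun m => heven1 m 0)]
    have h00 : Hfun (0, 0) = 0 := if_pos rfl
    rw [h00, zero_add]
    congr 1
    exact tsum_congr fun m => Hfun_pnat_zero m
  have hT0 : T 0 = ∑' n : ℕ+, Gfun ((n:ℝ)^2) := tsum_congr fun n => Hfun_zero_pnat n
  have hTeven : ∀ m : ℤ, T (-m) = T m := fun m => tsum_congr (fun n => heven1 m _)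
  have hTsplit : ∑' m : ℤ, T m = T 0 + 2 * ∑' m : ℕ+, T ((m:ℕ):ℤ) :=
    tsum_int_even hTsum hTeven
  have hTpnat : ∑' m : ℕ+, T ((m:ℕ):ℤ) = ∑' q : ℕ+ × ℕ+, Gfun ((q.1:ℝ)^2 + (q.2:ℝ)^2) := by
    rw [Summable.tsum_prod' summable_G_pnat_prod (fun m => summable_G_pnat_prod.prod_factor m)]
    exact tsum_congr fun m => tsum_congr fun n => (Hfun_pnat_pnat m n)
  rw [hfull, hsplit, hcol, hTsplit, hT0, hTpnat]
  ring

example : True := trivial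

lemma tsum_subtype_H :
    (∑' p : ↥(({0} : Set (ℤ × ℤ))ᶜ),
        Gfun (((p : ℤ × ℤ).1 : ℝ)^2 + ((p : ℤ × ℤ).2 : ℝ)^2))
      = ∑' p : ℤ × ℤ, Hfun p := by
  rw [tsum_subtype (({0} : Set (ℤ × ℤ))ᶜ)
    (fun p : ℤ × ℤ => Gfun ((p.1:ℝ)^2 + (p.2:ℝ)^2))]
  apply tsum_congr
  intro p
  rw [Set.indicator_apply, Hfun]
  by_cases hp : p = 0
  · simp [hp]
  · simp [hp]

lemma Gfun_eq {k : ℝ} (hk : 0 < k) :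
    Gfun k = Real.pi ^ (-(1:ℝ)/2) * (k ^ (-(1:ℝ)/2) * iGamma (1/2) (Real.pi * k)) := by
  rw [Gfun, Real.mul_rpow Real.pi_pos.le hk.le, mul_assoc]

lemma sq_rpow_neg_half {x : ℝ} (hx : 0 < x) : (x^2) ^ (-(1:ℝ)/2) = x⁻¹ := by
  rw [← Real.rpow_natCast x 2, ← Real.rpow_mul hx.le]
  norm_num
  exact Real.rpow_neg_one x

lemma Gfun_sq_eq (n : ℕ+) :
    Gfun ((n:ℝ)^2)
      = Real.pi ^ (-(1:ℝ)/2) * ((n:ℝ)⁻¹ * iGamma (1/2) (Real.pi * (n:ℝ)^2)) := by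
  have hn : (0:ℝ) < (n:ℝ) := by exact_mod_cast n.pos
  rw [Gfun_eq (by positivity), sq_rpow_neg_half hn]

set_option maxHeartbeats 2000000 in
/-- `∫₁^∞ u^{-1/2}(θ(u)²-1) du` equals
`4π^{-1/2}[∑_{n₁,n₂≥1} (n₁²+n₂²)^{-1/2} Γ(1/2, π(n₁²+n₂²)) + ∑_{n≥1} n^{-1} Γ(1/2, πn²)]`,
and both series on the right converge absolutely. -/
theorem L_eq_incomplete_gamma :
    Summable (fun q : ℕ+ × ℕ+ =>
      |((q.1 : ℝ) ^ 2 + (q.2 : ℝ) ^ 2) ^ (-(1 : ℝ) / 2) *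
        iGamma (1 / 2) (Real.pi * ((q.1 : ℝ) ^ 2 + (q.2 : ℝ) ^ 2))|) ∧
    Summable (fun n : ℕ+ => |(n : ℝ)⁻¹ * iGamma (1 / 2) (Real.pi * (n : ℝ) ^ 2)|) ∧
    (∫ u in Set.Ioi (1 : ℝ), u ^ (-(1 : ℝ) / 2) * ((jTheta u) ^ 2 - 1))
      = 4 * Real.pi ^ (-(1 : ℝ) / 2) *
        ((∑' q : ℕ+ × ℕ+,
            ((q.1 : ℝ) ^ 2 + (q.2 : ℝ) ^ 2) ^ (-(1 : ℝ) / 2) *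
              iGamma (1 / 2) (Real.pi * ((q.1 : ℝ) ^ 2 + (q.2 : ℝ) ^ 2)))
          + ∑' n : ℕ+, (n : ℝ)⁻¹ * iGamma (1 / 2) (Real.pi * (n : ℝ) ^ 2)) := by
  refine ⟨?_, ?_, ?_⟩
  · have hle : ∀ q : ℕ+ × ℕ+,
        |((q.1 : ℝ) ^ 2 + (q.2 : ℝ) ^ 2) ^ (-(1 : ℝ) / 2) *
          iGamma (1 / 2) (Real.pi * ((q.1 : ℝ) ^ 2 + (q.2 : ℝ) ^ 2))|
        ≤ Real.exp (-Real.pi * (q.1:ℝ)^2) * Real.exp (-Real.pi * (q.2:ℝ)^2) := by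
      intro q
      rw [abs_of_nonneg (term_nonneg (lt_of_lt_of_le one_pos (pnat_sq_one_le q))), ← exp_split]
      exact term_le (pnat_sq_one_le q)
    exact Summable.of_nonneg_of_le (fun q => abs_nonneg _) hle
      (Summable.mul_of_nonneg expsq_pnat expsq_pnat
        (fun n => exp_nonneg _) (fun n => exp_nonneg _))
  · have hle : ∀ n : ℕ+, |(n : ℝ)⁻¹ * iGamma (1 / 2) (Real.pi * (n : ℝ) ^ 2)|
        ≤ Real.exp (-Real.pi * (n:ℝ)^2) := by
      intro n
      have hn : (1:ℝ) ≤ (n:ℝ) := pnat_one_le n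
      have hn2 : (1:ℝ) ≤ (n:ℝ)^2 := by nlinarith
      have hpos : 0 < Real.pi * (n:ℝ)^2 := mul_pos Real.pi_pos (by nlinarith)
      rw [abs_of_nonneg (mul_nonneg (by positivity) (iGamma_half_nonneg hpos))]
      calc (n : ℝ)⁻¹ * iGamma (1 / 2) (Real.pi * (n : ℝ) ^ 2)
          ≤ 1 * Real.exp (-(Real.pi * (n:ℝ)^2)) := by
            apply mul_le_mul _ (iGamma_half_le (one_le_pi_mul hn2))
              (iGamma_half_nonneg hpos) one_pos.le
            rw [inv_le_one_iff₀]
            right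
            exact hn
        _ = Real.exp (-Real.pi * (n:ℝ)^2) := by rw [one_mul, neg_mul]
    exact Summable.of_nonneg_of_le (fun n => abs_nonneg _) hle expsq_pnat
  · rw [integral_eq_tsum_G, tsum_subtype_H, tsum_H_eq]
    have hC : ∑' q : ℕ+ × ℕ+, Gfun ((q.1:ℝ)^2 + (q.2:ℝ)^2)
        = Real.pi ^ (-(1:ℝ)/2) *
          ∑' q : ℕ+ × ℕ+,
            ((q.1 : ℝ) ^ 2 + (q.2 : ℝ) ^ 2) ^ (-(1 : ℝ) / 2) *
              iGamma (1 / 2) (Real.pi * ((q.1 : ℝ) ^ 2 + (q.2 : ℝ) ^ 2)) := by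
      rw [← tsum_mul_left]
      exact tsum_congr fun q => by
        rw [Gfun_eq (lt_of_lt_of_le one_pos (pnat_sq_one_le q))]
    have hA : ∑' n : ℕ+, Gfun ((n:ℝ)^2)
        = Real.pi ^ (-(1:ℝ)/2) *
          ∑' n : ℕ+, (n : ℝ)⁻¹ * iGamma (1 / 2) (Real.pi * (n : ℝ) ^ 2) := by
      rw [← tsum_mul_left]
      exact tsum_congr fun n => Gfun_sq_eq n
    rw [hC, hA]
    ring
end
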